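/- Every well-formed de Bruijn formula is the translation of some nominal formula: if wf_dbfm x then there exists a formula A (up to α-equivalence) with x = trans_fm [] A. -/

import Mathlib

/-- Terms of the language of hereditarily finite set theory. -/
inductive Tm : Type where
  | Zero : Tm
  | Var : ℕ → Tm
  | Eats : Tm → Tm → Tm

/-- Formulas of the language of HF set theory (named-variable syntax). -/
inductive Fm : Type where
  | Mem : Tm → Tm → Fm
  | Eq : Tm → Tm → Fm
  | Disj : Fm → Fm → Fm
  | Neg : Fm → Fm
  | Ex : ℕ → Fm → Fm

/-- Substitution of a term for a variable in a term. -/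
def substTm (i : ℕ) (x : Tm) : Tm → Tm
  | .Zero => .Zero
  | .Var k => if i = k then x else .Var k
  | .Eats t u => .Eats (substTm i x t) (substTm i x u)

/-- Substitution of a term for a variable in a formula. -/
def substFm (i : ℕ) (x : Tm) : Fm → Fm
  | .Mem t u => .Mem (substTm i x t) (substTm i x u)
  | .Eq t u => .Eq (substTm i x t) (substTm i x u)
  | .Disj A B => .Disj (substFm i x A) (substFm i x B)
  | .Neg A => .Neg (substFm i x A)
  | .Ex k A => if i = k then .Ex k A else .Ex k (substFm i x A)

/-- Free variables of a term. -/
def fvTm : Tm → Finset ℕ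
  | .Zero => ∅
  | .Var k => {k}
  | .Eats t u => fvTm t ∪ fvTm u

/-- Free variables of a formula. -/
def fvFm : Fm → Finset ℕ
  | .Mem t u => fvTm t ∪ fvTm u
  | .Eq t u => fvTm t ∪ fvTm u
  | .Disj A B => fvFm A ∪ fvFm B
  | .Neg A => fvFm A
  | .Ex k A => fvFm A \ {k}

/-- All variables (free or bound) occurring in a formula. -/
def varsFm : Fm → Finset ℕ
  | .Mem t u => fvTm t ∪ fvTm u
  | .Eq t u => fvTm t ∪ fvTm u
  | .Disj A B => varsFm A ∪ varsFm B
  | .Neg A => varsFm A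
  | .Ex k A => insert k (varsFm A)

/-- Derived connectives. -/
def fmImp (A B : Fm) : Fm := .Disj (.Neg A) B
def fmConj (A B : Fm) : Fm := .Neg (.Disj (.Neg A) (.Neg B))
def fmIff (A B : Fm) : Fm := fmConj (fmImp A B) (fmImp B A)
def fmAll (i : ℕ) (A : Fm) : Fm := .Neg (.Ex i (.Neg A))
def fmAll2 (i : ℕ) (t : Tm) (A : Fm) : Fm := fmAll i (fmImp (.Mem (.Var i) t) A)

/-- Falsehood: `0 ∈ 0`. -/
def fmFls : Fm := .Mem .Zero .Zero

/-- The subset relation `t ⊆ u`, via a bounded universal quantifier with a fresh variable. -/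
def SubsetFm (t u : Tm) : Fm :=
  fmAll2 (((fvTm t ∪ fvTm u).sup id) + 1) t (.Mem (.Var (((fvTm t ∪ fvTm u).sup id) + 1)) u)

/-- Sentential (boolean) axioms. -/
inductive BoolAx : Fm → Prop where
  | ident (A) : BoolAx (fmImp A A)
  | disjI1 (A B) : BoolAx (fmImp A (.Disj A B))
  | disjCont (A) : BoolAx (fmImp (.Disj A A) A)
  | disjAssoc (A B C) : BoolAx (fmImp (.Disj A (.Disj B C)) (.Disj (.Disj A B) C))
  | disjConj (A B C) : BoolAx (fmImp (.Disj C A) (fmImp (.Disj (.Neg C) B) (.Disj A B)))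

/-- Equality axioms. -/
def EqAx (A : Fm) : Prop :=
  A = .Eq (.Var 1) (.Var 1) ∨
  A = fmImp (fmConj (.Eq (.Var 1) (.Var 2)) (.Eq (.Var 3) (.Var 4)))
        (fmImp (.Eq (.Var 1) (.Var 3)) (.Eq (.Var 2) (.Var 4))) ∨
  A = fmImp (fmConj (.Eq (.Var 1) (.Var 2)) (.Eq (.Var 3) (.Var 4)))
        (fmImp (.Mem (.Var 1) (.Var 3)) (.Mem (.Var 2) (.Var 4))) ∨
  A = fmImp (fmConj (.Eq (.Var 1) (.Var 2)) (.Eq (.Var 3) (.Var 4)))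
        (.Eq (.Eats (.Var 1) (.Var 3)) (.Eats (.Var 2) (.Var 4)))

/-- Specialisation axioms `A(i := x) → ∃i A`. -/
inductive SpecAx : Fm → Prop where
  | I (i : ℕ) (x : Tm) (A : Fm) : SpecAx (fmImp (substFm i x A) (.Ex i A))

/-- HF1: `z = 0 ↔ ∀x, x ∉ z`. -/
def HF1fm : Fm :=
  fmIff (.Eq (.Var 0) .Zero) (fmAll 1 (.Neg (.Mem (.Var 1) (.Var 0))))

/-- HF2: `z = x ◁ y ↔ ∀u, u ∈ z ↔ u ∈ x ∨ u = y`. -/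
def HF2fm : Fm :=
  fmIff (.Eq (.Var 0) (.Eats (.Var 1) (.Var 2)))
    (fmAll 3 (fmIff (.Mem (.Var 3) (.Var 0))
      (.Disj (.Mem (.Var 3) (.Var 1)) (.Eq (.Var 3) (.Var 2)))))

def HFAx (A : Fm) : Prop := A = HF1fm ∨ A = HF2fm

/-- The induction axiom scheme HF3. -/
inductive IndAx : Fm → Prop where
  | ind (i j : ℕ) (A : Fm) : j ≠ i → j ∉ fvFm A →
      IndAx (fmImp (substFm i .Zero A)
        (fmImp (fmAll i (fmAll j (fmImp A (fmImp (substFm i (.Var j) A)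
              (substFm i (.Eats (.Var i) (.Var j)) A)))))
          (fmAll i A)))

/-- The (sequent-style) HF calculus `H ⊢ A`. -/
inductive Thm : Set Fm → Fm → Prop where
  | hyp {H A} : A ∈ H → Thm H A
  | bool {H A} : BoolAx A → Thm H A
  | eq {H A} : EqAx A → Thm H A
  | spec {H A} : SpecAx A → Thm H A
  | hf {H A} : HFAx A → Thm H A
  | ind {H A} : IndAx A → Thm H A
  | mp {H H' A B} : Thm H (fmImp A B) → Thm H' A → Thm (H ∪ H') B
  | exi {H A B i} : Thm H (fmImp A B) → i ∉ fvFm B → (∀ C ∈ H, i ∉ fvFm C) →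
      Thm H (fmImp (.Ex i A) B)

/-- The standard model of HF set theory: natural numbers with Ackermann membership. -/
def memN (x y : ℕ) : Prop := Nat.testBit y x = true

/-- Evaluation of terms in the standard model, relative to an environment. -/
def evalTm (e : ℕ → ℕ) : Tm → ℕ
  | .Zero => 0
  | .Var k => e k
  | .Eats t u => evalTm e t ||| 2 ^ evalTm e u

/-- Evaluation (truth) of formulas in the standard model. -/
def evalFm (e : ℕ → ℕ) : Fm → Prop
  | .Mem t u => memN (evalTm e t) (evalTm e u)
  | .Eq t u => evalTm e t = evalTm e u
  | .Disj A B => evalFm e A ∨ evalFm e B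
  | .Neg A => ¬ evalFm e A
  | .Ex k A => ∃ x : ℕ, evalFm (Function.update e k x) A

/-- The null environment. -/
def e0 : ℕ → ℕ := fun _ => 0

/-- Strict Σ formulas. -/
inductive SsFm : Fm → Prop where
  | mem (i j : ℕ) : SsFm (.Mem (.Var i) (.Var j))
  | disj {A B} : SsFm A → SsFm B → SsFm (.Disj A B)
  | conj {A B} : SsFm A → SsFm B → SsFm (fmConj A B)
  | ex {A} (i : ℕ) : SsFm A → SsFm (.Ex i A)
  | all2 {A} (i j : ℕ) : SsFm A → j ≠ i → j ∉ fvFm A → SsFm (fmAll2 i (.Var j) A)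

/-- Σ formulas: provably equivalent to a strict Σ formula with no new free variables. -/
def SigmaFm (A : Fm) : Prop :=
  ∃ B, SsFm B ∧ fvFm B ⊆ fvFm A ∧ Thm ∅ (fmIff A B)

/-- α-equivalence of formulas. -/
inductive AEq : Fm → Fm → Prop where
  | mem (t u) : AEq (.Mem t u) (.Mem t u)
  | eq (t u) : AEq (.Eq t u) (.Eq t u)
  | disj {A A' B B'} : AEq A A' → AEq B B' → AEq (.Disj A B) (.Disj A' B')
  | neg {A A'} : AEq A A' → AEq (.Neg A) (.Neg A')
  | ex {A B} (i j : ℕ) :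
      (∀ k, k ∉ varsFm A → k ∉ varsFm B → k ≠ i → k ≠ j →
        AEq (substFm i (.Var k) A) (substFm j (.Var k) B)) →
      AEq (.Ex i A) (.Ex j B)

/-- De Bruijn terms. -/
inductive DbTm : Type where
  | DBZero : DbTm
  | DBVar : ℕ → DbTm
  | DBInd : ℕ → DbTm
  | DBEats : DbTm → DbTm → DbTm

/-- De Bruijn formulas. -/
inductive DbFm : Type where
  | DBMem : DbTm → DbTm → DbFm
  | DBEq : DbTm → DbTm → DbFm
  | DBDisj : DbFm → DbFm → DbFm
  | DBNeg : DbFm → DbFm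
  | DBEx : DbFm → DbFm

/-- Lookup of a name in a list of bound names, innermost first. -/
def lookup : List ℕ → ℕ → ℕ → DbTm
  | [], _, x => .DBVar x
  | y :: ys, n, x => if x = y then .DBInd n else lookup ys (n+1) x

/-- Translation of a term into de Bruijn form. -/
def transTm (e : List ℕ) : Tm → DbTm
  | .Zero => .DBZero
  | .Var k => lookup e 0 k
  | .Eats t u => .DBEats (transTm e t) (transTm e u)

/-- Translation of a formula into de Bruijn form. -/
def transFm (e : List ℕ) : Fm → DbFm
  | .Mem t u => .DBMem (transTm e t) (transTm e u)
  | .Eq t u => .DBEq (transTm e t) (transTm e u)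
  | .Disj A B => .DBDisj (transFm e A) (transFm e B)
  | .Neg A => .DBNeg (transFm e A)
  | .Ex k A => .DBEx (transFm (k :: e) A)

/-- Abstraction of a de Bruijn term over a name, at binding depth `k`. -/
def abstDbTm (v : ℕ) (k : ℕ) : DbTm → DbTm
  | .DBZero => .DBZero
  | .DBVar n => if n = v then .DBInd k else .DBVar n
  | .DBInd j => .DBInd j
  | .DBEats t u => .DBEats (abstDbTm v k t) (abstDbTm v k u)

/-- Abstraction of a de Bruijn formula over a name. -/
def abstDbFm (v : ℕ) (k : ℕ) : DbFm → DbFm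
  | .DBMem t u => .DBMem (abstDbTm v k t) (abstDbTm v k u)
  | .DBEq t u => .DBEq (abstDbTm v k t) (abstDbTm v k u)
  | .DBDisj A B => .DBDisj (abstDbFm v k A) (abstDbFm v k B)
  | .DBNeg A => .DBNeg (abstDbFm v k A)
  | .DBEx A => .DBEx (abstDbFm v (k+1) A)

/-- Well-formed de Bruijn terms (no indices at all). -/
inductive WfDbTm : DbTm → Prop where
  | zero : WfDbTm .DBZero
  | var (n : ℕ) : WfDbTm (.DBVar n)
  | eats {t u} : WfDbTm t → WfDbTm u → WfDbTm (.DBEats t u)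

/-- Well-formed de Bruijn formulas. -/
inductive WfDbFm : DbFm → Prop where
  | mem {t u} : WfDbTm t → WfDbTm u → WfDbFm (.DBMem t u)
  | eq {t u} : WfDbTm t → WfDbTm u → WfDbFm (.DBEq t u)
  | disj {A B} : WfDbFm A → WfDbFm B → WfDbFm (.DBDisj A B)
  | neg {A} : WfDbFm A → WfDbFm (.DBNeg A)
  | ex {A} (v : ℕ) : WfDbFm A → WfDbFm (.DBEx (abstDbFm v 0 A))

/-- Singleton `{x}` in the Ackermann model. -/
def singN (x : ℕ) : ℕ := 2 ^ x
/-- Unordered pair `{x, y}`. -/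
def upairN (x y : ℕ) : ℕ := 2 ^ x ||| 2 ^ y
/-- Kuratowski ordered pair `⟨x, y⟩ = {{x}, {x,y}}`. -/
def hpairN (x y : ℕ) : ℕ := upairN (singN x) (upairN x y)
/-- Von Neumann ordinals. -/
def ordN : ℕ → ℕ
  | 0 => 0
  | n+1 => ordN n ||| 2 ^ (ordN n)
/-- `htupleN n` is an `(n+2)`-tuple of zeros (right-nested pairs). -/
def htupleN : ℕ → ℕ
  | 0 => hpairN 0 0
  | n+1 => hpairN 0 (htupleN n)

/-- Gödel coding of de Bruijn terms by HF sets. -/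
def quotDbTm : DbTm → ℕ
  | .DBZero => 0
  | .DBVar n => ordN (n+1)
  | .DBInd k => hpairN (htupleN 6) (ordN k)
  | .DBEats t u => hpairN (htupleN 1) (hpairN (quotDbTm t) (quotDbTm u))

/-- Gödel coding of de Bruijn formulas by HF sets. -/
def quotDbFm : DbFm → ℕ
  | .DBMem t u => hpairN (htupleN 0) (hpairN (quotDbTm t) (quotDbTm u))
  | .DBEq t u => hpairN (htupleN 2) (hpairN (quotDbTm t) (quotDbTm u))
  | .DBDisj A B => hpairN (htupleN 3) (hpairN (quotDbFm A) (quotDbFm B))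
  | .DBNeg A => hpairN (htupleN 4) (quotDbFm A)
  | .DBEx A => hpairN (htupleN 5) (quotDbFm A)

/-- The code (as an HF set) of a term / of a formula. -/
def codeTmN (t : Tm) : ℕ := quotDbTm (transTm [] t)
def codeFmN (A : Fm) : ℕ := quotDbFm (transFm [] A)

/-- HF-term constructors for pairs, ordinals, tuples: the quotation `⌜·⌝` as a term. -/
def HPairT (x y : Tm) : Tm :=
  .Eats (.Eats .Zero (.Eats .Zero x)) (.Eats (.Eats .Zero x) y)
def OrdOfT : ℕ → Tm
  | 0 => .Zero
  | n+1 => .Eats (OrdOfT n) (OrdOfT n)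
def HTupleT : ℕ → Tm
  | 0 => HPairT .Zero .Zero
  | n+1 => HPairT .Zero (HTupleT n)

def quotDbTmT : DbTm → Tm
  | .DBZero => .Zero
  | .DBVar n => OrdOfT (n+1)
  | .DBInd k => HPairT (HTupleT 6) (OrdOfT k)
  | .DBEats t u => HPairT (HTupleT 1) (HPairT (quotDbTmT t) (quotDbTmT u))

def quotDbFmT : DbFm → Tm
  | .DBMem t u => HPairT (HTupleT 0) (HPairT (quotDbTmT t) (quotDbTmT u))
  | .DBEq t u => HPairT (HTupleT 2) (HPairT (quotDbTmT t) (quotDbTmT u))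
  | .DBDisj A B => HPairT (HTupleT 3) (HPairT (quotDbFmT A) (quotDbFmT B))
  | .DBNeg A => HPairT (HTupleT 4) (quotDbFmT A)
  | .DBEx A => HPairT (HTupleT 5) (quotDbFmT A)

/-- The Gödel-code term `⌜t⌝` of a term, and `⌜A⌝` of a formula. -/
def qTm (t : Tm) : Tm := quotDbTmT (transTm [] t)
def qFm (A : Fm) : Tm := quotDbFmT (transFm [] A)

/-- `Q_Imp x y`: the HF term constructing the code of an implication
(implication `A → B` being `¬A ∨ B`). -/
def QImp (x y : Tm) : Tm := HPairT (HTupleT 3) (HPairT (HPairT (HTupleT 4) x) y)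

/-- The shadow provability predicate: `x` is the code of a theorem. -/
def PfShadow (x : ℕ) : Prop := ∃ A : Fm, x = codeFmN A ∧ Thm ∅ A

/-- `Pf` is a provability predicate: a Σ formula with only the free variable `0`
whose standard semantics is provability of the coded formula. -/
def IsProvabilityPred (Pf : Fm) : Prop :=
  SigmaFm Pf ∧ fvFm Pf ⊆ {0} ∧
  ∀ x : ℕ, (evalFm (Function.update e0 0 x) Pf ↔ PfShadow x)

/-- Application of a provability predicate to a (code) term: `PfP t`. -/
def PfApp (Pf : Fm) (t : Tm) : Fm := substFm 0 t Pf

lemma lookup_abst (v x n : ℕ) (e : List ℕ) :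
    abstDbTm v (n + e.length) (lookup e n x) = lookup (e ++ [v]) n x := by
  induction e generalizing n with
  | nil =>
    by_cases h : x = v <;> simp [h, lookup, abstDbTm]
  | cons y ys ih =>
    by_cases h : x = y
    · simp [lookup, h, abstDbTm]
    · simp only [lookup, List.cons_append, if_neg h]
      have := ih (n + 1)
      simpa [Nat.add_comm, Nat.add_assoc, Nat.add_left_comm, List.length_cons] using this

lemma abst_transTm (v : ℕ) (e : List ℕ) (t : Tm) :
    abstDbTm v e.length (transTm e t) = transTm (e ++ [v]) t := by
  induction t with
  | Zero => simp [transTm, abstDbTm]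
  | Var k => simpa [transTm] using lookup_abst v k 0 e
  | Eats a b iha ihb => simp [transTm, abstDbTm, iha, ihb]

lemma abst_transFm (v : ℕ) (e : List ℕ) (A : Fm) :
    abstDbFm v e.length (transFm e A) = transFm (e ++ [v]) A := by
  induction A generalizing e with
  | Mem t u => simp [transFm, abstDbFm, abst_transTm]
  | Eq t u => simp [transFm, abstDbFm, abst_transTm]
  | Disj a b iha ihb => simp [transFm, abstDbFm, iha, ihb]
  | Neg a ih => simp [transFm, abstDbFm, ih]
  | Ex k a ih =>
    simp only [transFm, abstDbFm]
    have := ih (k :: e)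
    simpa [List.length_cons] using this

lemma wf_dbtm_imp_is_tm (t : DbTm) (h : WfDbTm t) : ∃ s : Tm, t = transTm [] s := by
  induction h with
  | zero => exact ⟨.Zero, rfl⟩
  | var n => exact ⟨.Var n, rfl⟩
  | eats _ _ iht ihu =>
    obtain ⟨a, rfl⟩ := iht; obtain ⟨b, rfl⟩ := ihu
    exact ⟨.Eats a b, rfl⟩

/-- Every well-formed de Bruijn formula is the translation of a formula. -/
theorem wf_dbfm_imp_is_fm (x : DbFm) (h : WfDbFm x) :
    ∃ A : Fm, x = transFm [] A := by
  induction h with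
  | mem ht hu =>
    obtain ⟨a, rfl⟩ := wf_dbtm_imp_is_tm _ ht
    obtain ⟨b, rfl⟩ := wf_dbtm_imp_is_tm _ hu
    exact ⟨.Mem a b, rfl⟩
  | eq ht hu =>
    obtain ⟨a, rfl⟩ := wf_dbtm_imp_is_tm _ ht
    obtain ⟨b, rfl⟩ := wf_dbtm_imp_is_tm _ hu
    exact ⟨.Eq a b, rfl⟩
  | disj _ _ ihA ihB =>
    obtain ⟨a, rfl⟩ := ihA; obtain ⟨b, rfl⟩ := ihB
    exact ⟨.Disj a b, rfl⟩
  | neg _ ih =>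
    obtain ⟨a, rfl⟩ := ih
    exact ⟨.Neg a, rfl⟩
  | ex v _ ih =>
    obtain ⟨a, rfl⟩ := ih
    exact ⟨.Ex v a, congrArg DbFm.DBEx (abst_transFm v [] a)⟩
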